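/- In a Hilbert space with orthonormal basis (e_n), let X_n = span{e_n} for n odd and X_n = span{e_{n-1} + e_n/n} for n even. Then (X_n) is a skipped-blocking decomposition with constant 1 (every skipped projection R_n has norm 1), but the projections p_n onto X_n along the span of the remaining spaces satisfy ‖p_{2n}‖ ≥ 2n − 1 eventually, so (X_n) is not an FDD. -/

import Mathlib

open Submodule Set Filter Topology

variable {E : Type*} [NormedAddCommGroup E] [NormedSpace ℝ E]

/-- A sequence of subspaces is a DDD: finite-dimensional, total and minimal. -/
def IsDDD (X : ℕ → Submodule ℝ E) : Prop :=
  (∀ n, FiniteDimensional ℝ (X n)) ∧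
  (⨆ n, X n).topologicalClosure = ⊤ ∧
  ∀ n, X n ⊓ (⨆ m ∈ {m | m ≠ n}, X m).topologicalClosure = ⊥

/-- `(W i)` is a finite-dimensional decomposition of its closed linear span:
every element of the closed span is the limit of partial sums of a unique
sequence of vectors `w i ∈ W i`. -/
def IsFDDof (W : ℕ → Submodule ℝ E) : Prop :=
  ∀ x ∈ (⨆ i, W i).topologicalClosure, ∃! w : ℕ → E,
    (∀ i, w i ∈ W i) ∧
      Filter.Tendsto (fun N => ∑ i ∈ Finset.range N, w i) Filter.atTop (nhds x)

/-- Skipped blocking decomposition: a DDD such that every skipped sequence of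
blocks is an FDD of its closed linear span. -/
def IsSBD (X : ℕ → Submodule ℝ E) : Prop :=
  IsDDD X ∧ ∀ n m : ℕ → ℕ, (∀ i, n i ≤ m i) → (∀ i, m i + 1 < n (i + 1)) →
    IsFDDof (fun i => ⨆ j ∈ Set.Icc (n i) (m i), X j)

/-- Minimal f.d. sequence which is a skipped blocking decomposition of its closed span. -/
def IsSBDofSpan (W : ℕ → Submodule ℝ E) : Prop :=
  (∀ n, FiniteDimensional ℝ (W n)) ∧
  (∀ n, W n ⊓ (⨆ m ∈ {m | m ≠ n}, W m).topologicalClosure = ⊥) ∧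
  ∀ n m : ℕ → ℕ, (∀ i, n i ≤ m i) → (∀ i, m i + 1 < n (i + 1)) →
    IsFDDof (fun i => ⨆ j ∈ Set.Icc (n i) (m i), W j)

/-- Norm of the skipped projection `R_{m,k}` onto `X[0,m)` with kernel the closed
span of the tail `X[k+1,∞)` (the spaces `X_m, …, X_k` are skipped). -/
noncomputable def skippedNorm (X : ℕ → Submodule ℝ E) (m k : ℕ) : ℝ :=
  sInf {C : ℝ | 0 ≤ C ∧ ∀ a ∈ (⨆ i ∈ Set.Iio m, X i),
    ∀ b ∈ (⨆ i ∈ Set.Ici (k + 1), X i).topologicalClosure, ‖a‖ ≤ C * ‖a + b‖}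

/-- Annihilator of a subspace in the continuous dual. -/
noncomputable def ann {F : Type*} [NormedAddCommGroup F] [NormedSpace ℝ F] (S : Submodule ℝ F) :
    Submodule ℝ (F →L[ℝ] ℝ) where
  carrier := {f | ∀ x ∈ S, f x = 0}
  add_mem' := by intro f g hf hg x hx; simp [hf x hx, hg x hx]
  zero_mem' := by intro x hx; simp
  smul_mem' := by intro c f hf x hx; simp [hf x hx]

/-- The predecomposition space `Y = [X_n^*]` of a DDD, where
`X_n^* = [X_m]^⊥_{m ≠ n}`. -/
noncomputable def predecomp (X : ℕ → Submodule ℝ E) : Submodule ℝ (E →L[ℝ] ℝ) :=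
  (⨆ n, ann ((⨆ m ∈ {m | m ≠ n}, X m).topologicalClosure)).topologicalClosure

/-- A sequence of subspaces is boundedly complete: boundedness of the partial sums
of a sequence of vectors from the subspaces implies norm convergence. -/
def IsBddCompl (W : ℕ → Submodule ℝ E) : Prop :=
  ∀ v : ℕ → E, (∀ i, v i ∈ W i) →
    BddAbove (Set.range fun N => ‖∑ i ∈ Finset.range N, v i‖) →
    ∃ s : E, Filter.Tendsto (fun N => ∑ i ∈ Finset.range N, v i) Filter.atTop (nhds s)

/-- A Schauder basis of `E`. -/
def IsSchauderBasis (e : ℕ → E) : Prop :=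
  ∀ x : E, ∃! a : ℕ → ℝ,
    Filter.Tendsto (fun N => ∑ i ∈ Finset.range N, a i • e i) Filter.atTop (nhds x)


local notation "⟪" x ", " y "⟫" => @inner ℝ _ _ x y

/-- A sequence of pairwise-orthogonal finite-dimensional subspaces of a Hilbert space
is an FDD of its closed linear span. -/
lemma isFDDof_of_orthogonal {H : Type*} [NormedAddCommGroup H] [InnerProductSpace ℝ H]
    [CompleteSpace H] (W : ℕ → Submodule ℝ H) (hfd : ∀ i, FiniteDimensional ℝ (W i))
    (horth : ∀ i j, i ≠ j → W i ⟂ W j) : IsFDDof W := by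
  haveI := hfd
  intro x hx
  set w : ℕ → H := fun i => (orthogonalProjection (W i) x : H) with hw
  have hwmem : ∀ i, w i ∈ W i := fun i => SetLike.coe_mem _
  set U : ℕ → Submodule ℝ H := fun N => (Finset.range N).sup W with hUdef
  haveI hUfd : ∀ N, FiniteDimensional ℝ (U N) := fun N => by
    dsimp [U]; infer_instance
  have key : ∀ N, (orthogonalProjection (U N) x : H) = ∑ i ∈ Finset.range N, w i := by
    intro N
    apply eq_starProjection_of_mem_of_inner_eq_zero
    · exact Submodule.sum_mem _ fun i hi => SetLike.le_def.mp (Finset.le_sup hi) (hwmem i)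
    · intro z hz
      have hker : U N ≤ LinearMap.ker (innerSL ℝ (x - ∑ i ∈ Finset.range N, w i) : H →ₗ[ℝ] ℝ) := by
        refine Finset.sup_le fun j hj => ?_
        intro z hz
        have h1 : (∑ i ∈ Finset.range N, ⟪w i, z⟫) = ⟪w j, z⟫ := by
          refine Finset.sum_eq_single_of_mem j hj fun i _ hij => ?_
          exact (horth i j hij).inner_eq (hwmem i) hz
        have h2 : ⟪x - w j, z⟫ = 0 := by
          rw [real_inner_comm]
          exact (Submodule.mem_orthogonal _ _).mp
            (sub_starProjection_mem_orthogonal (K := W j) x) z hz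
        simp only [LinearMap.mem_ker, ContinuousLinearMap.coe_coe, innerSL_apply_apply]
        rw [inner_sub_left, sum_inner, h1, ← inner_sub_left, h2]
      exact hker hz
  have hmono : Monotone U := fun a b hab => Finset.sup_mono (Finset.range_subset_range.mpr hab)
  have hsup : (⨆ N, U N) = ⨆ i, W i :=
    le_antisymm (iSup_le fun N => Finset.sup_le fun i _ => le_iSup W i)
      (iSup_le fun i => le_iSup_of_le (i + 1)
        (Finset.le_sup (Finset.mem_range.mpr (Nat.lt_succ_self i))))
  haveI : CompleteSpace ((⨆ N, U N).topologicalClosure : Submodule ℝ H) :=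
    (Submodule.isClosed_topologicalClosure _).completeSpace_coe
  have hx' : (orthogonalProjection (⨆ N, U N).topologicalClosure x : H) = x :=
    starProjection_eq_self_iff.mpr (by rw [hsup]; exact hx)
  have hlim : Filter.Tendsto (fun N => ∑ i ∈ Finset.range N, w i) Filter.atTop (nhds x) := by
    have h : Filter.Tendsto (fun N => (orthogonalProjection (U N) x : H)) atTop
        (nhds (orthogonalProjection (⨆ N, U N).topologicalClosure x : H)) :=
      starProjection_tendsto_closure_iSup U hmono x
    rw [hx'] at h
    simpa only [key] using h
  refine ⟨w, ⟨hwmem, hlim⟩, ?_⟩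
  rintro w' ⟨hw'mem, hw'lim⟩
  funext j
  set d : H := w' j - w j with hd
  have hdmem : d ∈ W j := Submodule.sub_mem _ (hw'mem j) (hwmem j)
  have hdiff : Filter.Tendsto
      (fun N => (∑ i ∈ Finset.range N, w' i) - ∑ i ∈ Finset.range N, w i)
      Filter.atTop (nhds 0) := by simpa using hw'lim.sub hlim
  have hten : Filter.Tendsto
      (fun N => ⟪(∑ i ∈ Finset.range N, w' i) - ∑ i ∈ Finset.range N, w i, d⟫)
      Filter.atTop (nhds ⟪(0 : H), d⟫) := hdiff.inner tendsto_const_nhds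
  have hev : (fun N => ⟪(∑ i ∈ Finset.range N, w' i) - ∑ i ∈ Finset.range N, w i, d⟫)
      =ᶠ[atTop] fun _ => ⟪d, d⟫ := by
    filter_upwards [eventually_ge_atTop (j + 1)] with N hN
    rw [← Finset.sum_sub_distrib, sum_inner]
    refine Finset.sum_eq_single_of_mem j (Finset.mem_range.mpr hN) fun i _ hij => ?_
    exact (horth i j hij).inner_eq (Submodule.sub_mem _ (hw'mem i) (hwmem i)) hdmem
  have hdd : ⟪d, d⟫ = ⟪(0 : H), d⟫ :=
    tendsto_nhds_unique tendsto_const_nhds (Filter.Tendsto.congr' hev hten)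
  rw [inner_zero_left] at hdd
  exact sub_eq_zero.mp (inner_self_eq_zero.mp hdd)

set_option maxHeartbeats 2000000 in
/-- In a Hilbert space with orthonormal basis, the sequence
`X n = span {e n}` for `n` odd and `X n = span {e (n-1) + e n / n}` for `n` even
is an SBD with constant 1 (every skipped projection has norm 1), while the
projections `p n` onto `X n` along the span of the remaining spaces eventually
satisfy `‖p n‖ ≥ n - 1` for even `n`; hence `(X n)` is not an FDD. -/
theorem stmt2 {H : Type*} [NormedAddCommGroup H] [InnerProductSpace ℝ H] [CompleteSpace H]
    (e : ℕ → H) (he : Orthonormal ℝ e)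
    (htot : (Submodule.span ℝ (Set.range e)).topologicalClosure = ⊤)
    (X : ℕ → Submodule ℝ H)
    (hXdef : ∀ n, X n = if Odd n then Submodule.span ℝ {e n}
      else Submodule.span ℝ {e (n - 1) + ((n : ℝ))⁻¹ • e n}) :
    IsSBD X ∧
    (∀ k, ∀ a ∈ (⨆ i ∈ Set.Iio k, X i),
      ∀ b ∈ (⨆ i ∈ Set.Ici (k + 1), X i).topologicalClosure, ‖a‖ ≤ ‖a + b‖) ∧
    (∀ p : ℕ → H →L[ℝ] H,
      (∀ n, LinearMap.range ((p n : H →ₗ[ℝ] H)) = X n ∧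
        LinearMap.ker ((p n : H →ₗ[ℝ] H)) =
          (⨆ m ∈ {m | m ≠ n}, X m).topologicalClosure ∧
        ∀ x ∈ X n, p n x = x) →
      ∃ N : ℕ, ∀ n : ℕ, N ≤ n → Even n → (n : ℝ) - 1 ≤ ‖p n‖) ∧
    ¬ IsFDDof X := by
  classical
  have hee : ∀ i j, ⟪e i, e j⟫ = if i = j then (1:ℝ) else 0 := orthonormal_iff_ite.mp he
  set g : ℕ → H := fun n => if Odd n then e n else e (n - 1) + ((n : ℝ))⁻¹ • e n with hg
  have hXg : ∀ n, X n = span ℝ {g n} := by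
    intro n; rw [hXdef n]; by_cases h : Odd n <;> simp [hg, h]
  have hgmem : ∀ n, g n ∈ X n := fun n => by rw [hXg]; exact mem_span_singleton_self _
  -- membership of basis vectors
  have heX : ∀ i, Odd i → e i ∈ X i := by
    intro i h
    rw [hXg i]
    have hgi : g i = e i := by simp [hg, h]
    rw [hgi]; exact mem_span_singleton_self _
  have hrep : ∀ i, ¬ Odd i → i ≠ 0 → e i = (i : ℝ) • g i - (i : ℝ) • e (i - 1) := by
    intro i h hi0
    have hiR : (i : ℝ) ≠ 0 := Nat.cast_ne_zero.mpr hi0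
    simp only [hg, if_neg h, smul_add, smul_smul, mul_inv_cancel₀ hiR, one_smul]
    abel
  have hinner_g1 : ∀ k, ¬ Odd k → k ≠ 0 → ⟪e (k - 1), g k⟫ = 1 := by
    intro k hk hk0
    simp only [hg, if_neg hk]
    have hne : k - 1 ≠ k := by omega
    simp [inner_add_right, real_inner_smul_right, hee, hne, he.1]
  -- coordinate span inclusion
  have hXsub : ∀ j, X j ≤ span ℝ (e '' Set.Icc (j - 1) j) := by
    intro j
    rw [hXg, span_le, Set.singleton_subset_iff]
    by_cases h : Odd j
    · simp only [hg, if_pos h]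
      exact subset_span ⟨j, by simp [Set.mem_Icc], rfl⟩
    · simp only [hg, if_neg h]
      exact Submodule.add_mem _
        (subset_span ⟨j - 1, by simp [Set.mem_Icc], rfl⟩)
        (Submodule.smul_mem _ _ (subset_span ⟨j, by simp [Set.mem_Icc], rfl⟩))
  -- orthogonality of coordinate spans
  have hspanOrtho : ∀ A B : Set ℕ, Disjoint A B → span ℝ (e '' A) ⟂ span ℝ (e '' B) := by
    intro A B hAB
    rw [isOrtho_span]
    rintro _ ⟨i, hi, rfl⟩ _ ⟨j, hj, rfl⟩
    have hij : i ≠ j := fun h => Set.disjoint_left.mp hAB hi (h ▸ hj)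
    simp [hee, hij]
  -- conjunct 2
  have hC2 : ∀ k, ∀ a ∈ (⨆ i ∈ Set.Iio k, X i),
      ∀ b ∈ (⨆ i ∈ Set.Ici (k + 1), X i).topologicalClosure, ‖a‖ ≤ ‖a + b‖ := by
    intro k a ha b hb
    have hA : (⨆ i ∈ Set.Iio k, X i) ≤ span ℝ (e '' Set.Iio k) := by
      refine iSup₂_le fun i hi => (hXsub i).trans (span_mono (Set.image_mono ?_))
      simp only [Set.mem_Iio] at hi
      intro t ht; simp only [Set.mem_Icc] at ht; simp only [Set.mem_Iio]; omega
    have hB : (⨆ i ∈ Set.Ici (k + 1), X i) ≤ span ℝ (e '' Set.Ici k) := by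
      refine iSup₂_le fun i hi => (hXsub i).trans (span_mono (Set.image_mono ?_))
      simp only [Set.mem_Ici] at hi
      intro t ht; simp only [Set.mem_Icc] at ht; simp only [Set.mem_Ici]; omega
    have hO : span ℝ (e '' Set.Ici k) ≤ (span ℝ (e '' Set.Iio k))ᗮ :=
      ((hspanOrtho (Set.Iio k) (Set.Ici k) (by
        rw [Set.disjoint_left]; intro t ht ht'
        simp only [Set.mem_Iio] at ht; simp only [Set.mem_Ici] at ht'; omega)).symm).le
    have hbmem : b ∈ (span ℝ (e '' Set.Iio k))ᗮ :=
      topologicalClosure_minimal _ (hB.trans hO)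
        (span ℝ (e '' Set.Iio k)).isClosed_orthogonal hb
    have hab : ⟪a, b⟫ = 0 := (Submodule.mem_orthogonal _ _).mp hbmem a (hA ha)
    nlinarith [norm_add_sq_real a b, norm_nonneg (a + b), norm_nonneg a, sq_nonneg ‖b‖]
  -- totality
  have hetop : ∀ i, e i ∈ (⨆ n, X n) := by
    intro i
    by_cases h : Odd i
    · exact SetLike.le_def.mp (le_iSup X i) (heX i h)
    · rcases Nat.eq_zero_or_pos i with h0 | h0
      · subst h0
        have hgi : g 0 = e 0 := by simp [hg]
        have h1 : e 0 ∈ X 0 := by rw [hXg 0, ← hgi]; exact mem_span_singleton_self _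
        exact SetLike.le_def.mp (le_iSup X 0) h1
      · have hoddp : Odd (i - 1) := by
          rw [Nat.not_odd_iff_even, Nat.even_iff] at h; rw [Nat.odd_iff]; omega
        rw [hrep i h (by omega)]
        exact Submodule.sub_mem _
          (Submodule.smul_mem _ _ (SetLike.le_def.mp (le_iSup X i) (hgmem i)))
          (Submodule.smul_mem _ _ (SetLike.le_def.mp (le_iSup X (i - 1)) (heX _ hoddp)))
  have hTop : (⨆ n, X n).topologicalClosure = ⊤ := by
    refine le_antisymm le_top ?_
    rw [← htot]
    exact topologicalClosure_mono (span_le.mpr (by rintro _ ⟨i, rfl⟩; exact hetop i))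
  -- dual vectors for minimality
  have hdual : ∀ n, ∃ v : H, ⟪v, g n⟫ ≠ 0 ∧ ∀ m, m ≠ n → ⟪v, g m⟫ = 0 := by
    intro n
    by_cases hn : Odd n
    · refine ⟨e n - ((n : ℝ) + 1) • e (n + 1), ?_, ?_⟩
      · simp only [hg, if_pos hn]
        have h2 : n + 1 ≠ n := by omega
        simp [inner_sub_left, real_inner_smul_left, hee, h2, he.ne_zero]
      · intro m hmn
        rw [Nat.odd_iff] at hn
        by_cases hm : Odd m
        · simp only [hg, if_pos hm]
          rw [Nat.odd_iff] at hm
          have h1 : n ≠ m := by omega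
          have h2 : n + 1 ≠ m := by omega
          simp [inner_sub_left, real_inner_smul_left, hee, h1, h2]
        · simp only [hg, if_neg hm]
          rw [Nat.not_odd_iff_even, Nat.even_iff] at hm
          by_cases hm1 : m = n + 1
          · subst hm1
            have h1 : n ≠ n + 1 := by omega
            simp [inner_sub_left, inner_add_right, real_inner_smul_left,
              real_inner_smul_right, hee, h1, h1.symm, he.1]
            field_simp
            norm_num
          · have h1 : n ≠ m - 1 := by omega
            have h2 : n + 1 ≠ m - 1 := by omega
            have h3 : n ≠ m := by omega
            have h4 : n + 1 ≠ m := by omega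
            simp [inner_sub_left, inner_add_right, real_inner_smul_left,
              real_inner_smul_right, hee, h1, h2, h3, h4]
    · refine ⟨e n, ?_, ?_⟩
      · simp only [hg, if_neg hn]
        rw [Nat.not_odd_iff_even, Nat.even_iff] at hn
        rcases Nat.eq_zero_or_pos n with h0 | h0
        · subst h0; simp [inner_add_right, real_inner_smul_right, hee, he.ne_zero]
        · have h1 : n ≠ n - 1 := by omega
          have h2 : (n : ℝ)⁻¹ ≠ 0 := by
            simp only [ne_eq, inv_eq_zero, Nat.cast_eq_zero]; omega
          simp [inner_add_right, real_inner_smul_right, hee, h1, Ne.symm h1, h2, he.ne_zero]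
      · intro m hmn
        rw [Nat.not_odd_iff_even, Nat.even_iff] at hn
        by_cases hm : Odd m
        · simp only [hg, if_pos hm]
          rw [Nat.odd_iff] at hm
          have h1 : n ≠ m := by omega
          simp [hee, h1]
        · simp only [hg, if_neg hm]
          rw [Nat.not_odd_iff_even, Nat.even_iff] at hm
          have h1 : n ≠ m - 1 := by omega
          have h3 : n ≠ m := by omega
          simp [inner_add_right, real_inner_smul_right, hee, h1, h3]
  -- minimality
  have hMin : ∀ n, X n ⊓ (⨆ m ∈ {m | m ≠ n}, X m).topologicalClosure = ⊥ := by
    intro n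
    obtain ⟨v, hv1, hv2⟩ := hdual n
    rw [eq_bot_iff]
    intro x hx
    rw [Submodule.mem_inf] at hx
    obtain ⟨hx1, hx2⟩ := hx
    have hker : (⨆ m ∈ {m | m ≠ n}, X m) ≤ LinearMap.ker (innerSL ℝ v : H →ₗ[ℝ] ℝ) := by
      refine iSup₂_le fun m hm => ?_
      rw [hXg, span_le, Set.singleton_subset_iff]
      simpa using hv2 m hm
    have hker2 : (⨆ m ∈ {m | m ≠ n}, X m).topologicalClosure ≤
        LinearMap.ker (innerSL ℝ v : H →ₗ[ℝ] ℝ) :=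
      topologicalClosure_minimal _ hker (ContinuousLinearMap.isClosed_ker _)
    have hxv : ⟪v, x⟫ = 0 := by simpa using hker2 hx2
    rw [hXg] at hx1
    obtain ⟨c, hc⟩ := mem_span_singleton.mp hx1
    rw [← hc, real_inner_smul_right] at hxv
    have hc0 : c = 0 := by
      rcases mul_eq_zero.mp hxv with h | h
      · exact h
      · exact absurd h hv1
    rw [Submodule.mem_bot, ← hc, hc0, zero_smul]
  -- finite-dimensionality
  have hfdX : ∀ n, FiniteDimensional ℝ (X n) := fun n => by
    rw [hXg]; exact FiniteDimensional.span_of_finite ℝ (Set.finite_singleton _)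
  -- blocks are FDDs
  have hBlocks : ∀ n m : ℕ → ℕ, (∀ i, n i ≤ m i) → (∀ i, m i + 1 < n (i + 1)) →
      IsFDDof (fun i => ⨆ j ∈ Set.Icc (n i) (m i), X j) := by
    intro n m hnm hskip
    have hlt : ∀ i j, i < j → m i + 1 < n j := by
      intro i j hij
      induction j with
      | zero => omega
      | succ j ih =>
        rcases Nat.lt_succ_iff_lt_or_eq.mp hij with h | h
        · have := ih h; have := hnm j; have := hskip j; omega
        · subst h; exact hskip i
    have hWsub : ∀ i, (⨆ j ∈ Set.Icc (n i) (m i), X j) ≤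
        span ℝ (e '' Set.Icc (n i - 1) (m i)) := by
      intro i
      refine iSup₂_le fun j hj => (hXsub j).trans (span_mono (Set.image_mono ?_))
      simp only [Set.mem_Icc] at hj
      intro t ht; simp only [Set.mem_Icc] at ht ⊢; omega
    have horth : ∀ i j, i ≠ j →
        (⨆ j' ∈ Set.Icc (n i) (m i), X j') ⟂ (⨆ j' ∈ Set.Icc (n j) (m j), X j') := by
      intro i j hij
      refine Submodule.IsOrtho.mono (hWsub i) (hWsub j) (hspanOrtho _ _ ?_)
      rw [Set.disjoint_left]
      intro t ht ht'
      simp only [Set.mem_Icc] at ht ht'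
      rcases Nat.lt_or_ge i j with h | h
      · have := hlt i j h; have := hnm i; have := hnm j; omega
      · have hji : j < i := by omega
        have := hlt j i hji; have := hnm i; have := hnm j; omega
    have hfd : ∀ i, FiniteDimensional ℝ (⨆ j ∈ Set.Icc (n i) (m i), X j : Submodule ℝ H) := by
      intro i
      haveI := FiniteDimensional.span_of_finite ℝ ((Set.finite_Icc (n i - 1) (m i)).image e)
      exact Submodule.finiteDimensional_of_le (hWsub i)
    exact isFDDof_of_orthogonal _ hfd horth
  refine ⟨⟨⟨hfdX, hTop, hMin⟩, hBlocks⟩, hC2, ?_, ?_⟩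
  -- conjunct 3: projections are eventually large
  · intro p hp
    refine ⟨0, fun n _ hev => ?_⟩
    rcases Nat.eq_zero_or_pos n with h0 | h0
    · subst h0
      simp only [Nat.cast_zero]
      linarith [norm_nonneg (p 0)]
    · have hn2 : ¬ Odd n := Nat.not_odd_iff_even.mpr hev
      obtain ⟨-, hker, hfix⟩ := hp n
      have hodd : Odd (n - 1) := by
        rw [Nat.even_iff] at hev; rw [Nat.odd_iff]; omega
      have h1 : p n (e (n - 1)) = 0 := by
        have hm : e (n - 1) ∈ X (n - 1) := heX _ hodd
        have hmem : e (n - 1) ∈ LinearMap.ker ((p n : H →ₗ[ℝ] H)) := by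
          rw [hker]
          apply le_topologicalClosure
          have hle2 : X (n - 1) ≤ ⨆ m ∈ {m | m ≠ n}, X m :=
            le_iSup₂ (f := fun m _ => X m) (n - 1) (show n - 1 ∈ {m | m ≠ n} by
              simp only [Set.mem_setOf_eq]; omega)
          exact hle2 hm
        simpa using hmem
      have h2 : p n (g n) = g n := hfix _ (hgmem n)
      have h3 : p n (e n) = (n : ℝ) • g n := by
        rw [hrep n hn2 (by omega), map_sub, map_smul, map_smul, h1, h2, smul_zero, sub_zero]
      have h4 : (n : ℝ) ≤ ‖p n (e n)‖ := by
        have hmain := real_inner_le_norm (e (n - 1)) ((n : ℝ) • g n)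
        rw [real_inner_smul_right, hinner_g1 n hn2 (by omega), mul_one,
          he.1 (n - 1), one_mul] at hmain
        rw [h3]; exact hmain
      have h5 : ‖p n (e n)‖ ≤ ‖p n‖ := by
        have := (p n).le_opNorm (e n)
        rwa [he.1 n, mul_one] at this
      linarith
  -- conjunct 4: not an FDD
  · intro hF
    set c : ℕ → ℝ := fun j => if Even j ∧ j ≠ 0 then (j : ℝ)⁻¹ else 0 with hcdef
    have hsum : Summable fun j => c j • e j := by
      have hs2 : Summable fun j => ‖c j‖ ^ 2 := by
        refine Summable.of_nonneg_of_le (fun j => by positivity) (fun j => ?_)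
          (Real.summable_one_div_nat_pow.mpr one_lt_two)
        rw [Real.norm_eq_abs, sq_abs]
        by_cases hj : Even j ∧ j ≠ 0
        · simp only [hcdef, if_pos hj, one_div, ← inv_pow]
          exact le_rfl
        · simp only [hcdef, if_neg hj]
          have h0 : (0:ℝ) ≤ 1 / (j:ℝ)^2 := by positivity
          simp only [zero_pow, ne_eq, OfNat.ofNat_ne_zero, not_false_eq_true]
          exact h0
      have := (he.orthogonalFamily.summable_iff_norm_sq_summable c).mpr hs2
      simpa [LinearIsometry.toSpanSingleton_apply] using this
    obtain ⟨x, hx⟩ := hsum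
    obtain ⟨w, ⟨hwmem, hwlim⟩, -⟩ := hF x (by rw [hTop]; trivial)
    have hwg : ∀ j, ∃ dj : ℝ, w j = dj • g j := by
      intro j
      have hj := hwmem j
      rw [hXg] at hj
      obtain ⟨dj, hdj⟩ := mem_span_singleton.mp hj
      exact ⟨dj, hdj.symm⟩
    choose d hd using hwg
    have hinner_gk : ∀ k i, Even k → k ≠ 0 → i ≠ k → ⟪e k, g i⟫ = 0 := by
      intro k i hk hk0 hik
      rw [Nat.even_iff] at hk
      by_cases hoi : Odd i
      · simp only [hg, if_pos hoi]
        rw [Nat.odd_iff] at hoi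
        have : k ≠ i := by omega
        simp [hee, this]
      · simp only [hg, if_neg hoi]
        rw [Nat.not_odd_iff_even, Nat.even_iff] at hoi
        have h1 : k ≠ i - 1 := by omega
        have h2 : k ≠ i := Ne.symm (by omega)
        simp [inner_add_right, real_inner_smul_right, hee, h1, h2]
    have hinner_gkk : ∀ k, Even k → k ≠ 0 → ⟪e k, g k⟫ = (k : ℝ)⁻¹ := by
      intro k hk hk0
      simp only [hg, if_neg (Nat.not_odd_iff_even.mpr hk)]
      have h1 : k ≠ k - 1 := by omega
      simp [inner_add_right, real_inner_smul_right, hee, h1, he.1]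
    have hxk : ∀ k, Even k → k ≠ 0 → ⟪e k, x⟫ = (k : ℝ)⁻¹ := by
      intro k hk hk0
      have h1 : HasSum (fun j => ⟪e k, c j • e j⟫) ⟪e k, x⟫ := (innerSL ℝ (e k)).hasSum hx
      have h2 : (fun j => ⟪e k, c j • e j⟫) = fun j => if j = k then (k : ℝ)⁻¹ else 0 := by
        funext j
        rw [real_inner_smul_right, hee]
        by_cases hjk : j = k
        · subst hjk; simp [hcdef, hk, hk0]
        · simp [hjk, Ne.symm hjk]
      rw [h2] at h1
      exact h1.unique (hasSum_ite_eq k _)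
    have hdk : ∀ k, Even k → k ≠ 0 → d k = 1 := by
      intro k hk hk0
      have hkinv : (k : ℝ)⁻¹ ≠ 0 := by
        simp only [ne_eq, inv_eq_zero, Nat.cast_eq_zero]; omega
      have hlim2 : Filter.Tendsto (fun N => ⟪e k, ∑ i ∈ Finset.range N, w i⟫)
          Filter.atTop (nhds ⟪e k, x⟫) := tendsto_const_nhds.inner hwlim
      have hev2 : (fun N => ⟪e k, ∑ i ∈ Finset.range N, w i⟫)
          =ᶠ[atTop] fun _ => d k * (k : ℝ)⁻¹ := by
        filter_upwards [eventually_ge_atTop (k + 1)] with N hN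
        rw [inner_sum]
        rw [Finset.sum_eq_single_of_mem k (Finset.mem_range.mpr (by omega))
          (fun i _ hik => by rw [hd i, real_inner_smul_right, hinner_gk k i hk hk0 hik, mul_zero])]
        rw [hd k, real_inner_smul_right, hinner_gkk k hk hk0]
      have heq : ⟪e k, x⟫ = d k * (k : ℝ)⁻¹ :=
        tendsto_nhds_unique (Filter.Tendsto.congr' hev2 hlim2) tendsto_const_nhds
      rw [hxk k hk hk0] at heq
      field_simp at heq
      linarith [heq]
    have hw0 : Filter.Tendsto (fun N => ‖w N‖) Filter.atTop (nhds 0) := by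
      have h1 : Filter.Tendsto
          (fun N => (∑ i ∈ Finset.range (N + 1), w i) - ∑ i ∈ Finset.range N, w i)
          Filter.atTop (nhds (x - x)) :=
        (hwlim.comp (tendsto_add_atTop_nat 1)).sub hwlim
      simp only [Finset.sum_range_succ, add_sub_cancel_left, sub_self] at h1
      simpa using h1.norm
    have hlt1 : ∀ᶠ N in atTop, ‖w N‖ < 1 := hw0.eventually_lt_const one_pos
    obtain ⟨N₀, hN₀⟩ := eventually_atTop.mp hlt1
    have hkev : Even (2 * N₀ + 2) := by rw [Nat.even_iff]; omega
    have hk0 : (2 * N₀ + 2 : ℕ) ≠ 0 := by omega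
    have hsmall : ‖w (2 * N₀ + 2)‖ < 1 := hN₀ _ (by omega)
    have hwk : w (2 * N₀ + 2) = g (2 * N₀ + 2) := by
      rw [hd, hdk _ hkev hk0, one_smul]
    have hbig : (1 : ℝ) ≤ ‖g (2 * N₀ + 2)‖ := by
      have h := real_inner_le_norm (e (2 * N₀ + 2 - 1)) (g (2 * N₀ + 2))
      rw [hinner_g1 _ (Nat.not_odd_iff_even.mpr hkev) hk0, he.1, one_mul] at h
      exact h
    rw [hwk] at hsmall
    linarith
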